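/- In the two-stage model with η(·, θ₀), η'(·, θ₀), η''(·, θ₀) bounded Borel functions on [a,b], the observed information j_n(θ₀) = (n₁/σ²)η'(x₁, θ₀)² − (n₁/σ²)(ȳ₁ − η(x₁, θ₀))η''(x₁, θ₀) + (n₂/σ²)η'(x₂, θ₀)² − (n₂/σ²)(ȳ₂ − η(x₂, θ₀))η''(x₂, θ₀) satisfies E[j_n(θ₀)] = (n₁/σ²) η'(x₁, θ₀)² + (n₂/σ²) E[η'(x₂, θ₀)²]; that is, the Fisher information of the two-stage adaptive design equals the first-stage information plus the expected second-stage information, the cross terms involving η'' having zero expectation. -/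

import Mathlib

open MeasureTheory ProbabilityTheory Filter
open scoped NNReal

private lemma integrable_id_gaussian0 {v : ℝ≥0} (hv : v ≠ 0) :
    Integrable (fun x : ℝ => x) (gaussianReal 0 v) := by
  have hv' : (0:ℝ) < v := by positivity
  rw [gaussianReal_of_var_ne_zero _ hv,
    integrable_withDensity_iff (measurable_gaussianPDF _ _)
      (Filter.Eventually.of_forall fun x => ENNReal.ofReal_lt_top)]
  have hb : (0:ℝ) < (2 * (v:ℝ))⁻¹ := by positivity
  have h := (integrable_mul_exp_neg_mul_sq hb).const_mul (Real.sqrt (2 * Real.pi * v))⁻¹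
  refine h.congr (Filter.Eventually.of_forall fun x => ?_)
  simp only [gaussianPDF]
  rw [ENNReal.toReal_ofReal (gaussianPDFReal_nonneg _ _ _), gaussianPDFReal, sub_zero]
  rw [show -x ^ 2 / (2 * (v:ℝ)) = -(2 * (v:ℝ))⁻¹ * x ^ 2 by field_simp]
  ring

private lemma integral_id_gaussian0 (v : ℝ≥0) : ∫ x, x ∂(gaussianReal 0 v) = 0 := by
  have h1 : (⟨(-1:ℝ)^2, sq_nonneg _⟩ : ℝ≥0) = 1 := by ext; norm_num
  have hmap : (gaussianReal 0 v).map ((-1:ℝ) * ·) = gaussianReal 0 v := by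
    rw [gaussianReal_map_const_mul]
    congr 1
    · simp
    · ext; simp
  have h2 : ∫ x, x ∂(gaussianReal 0 v) = ∫ x, (-1:ℝ) * x ∂(gaussianReal 0 v) := by
    conv_lhs => rw [← hmap]
    exact integral_map (by fun_prop) aestronglyMeasurable_id
  simp only [neg_one_mul] at h2
  rw [integral_neg] at h2
  linarith

/-- The Fisher information of the two-stage adaptive design: the expectation of the observed
information equals the first-stage information plus the expected second-stage information,
the cross terms involving `η''` having zero expectation:
`E[j_n(θ₀)] = (n₁/σ²)·η'(x₁, θ₀)² + (n₂/σ²)·E[η'(x₂, θ₀)²]`. -/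
theorem expected_observed_information_eq_fisher_information
    {Ω : Type*} [mΩ : MeasurableSpace Ω] (μ : Measure Ω) [IsProbabilityMeasure μ]
    (n₁ : ℕ) (hn₁ : 1 ≤ n₁) (a b x₁ θ₀ σ : ℝ) (hab : a ≤ b) (hσ : 0 < σ)
    (η η' η'' : ℝ → ℝ → ℝ)
    (hderiv : ∀ x θ, HasDerivAt (fun t => η x t) (η' x θ) θ)
    (hderiv2 : ∀ x θ, HasDerivAt (fun t => η' x t) (η'' x θ) θ)
    (hη : Measurable fun x => η x θ₀) (hηbdd : ∃ C : ℝ, ∀ x ∈ Set.Icc a b, |η x θ₀| ≤ C)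
    (hη' : Measurable fun x => η' x θ₀) (hη'bdd : ∃ C : ℝ, ∀ x ∈ Set.Icc a b, |η' x θ₀| ≤ C)
    (hη'' : Measurable fun x => η'' x θ₀)
    (hη''bdd : ∃ C : ℝ, ∀ x ∈ Set.Icc a b, |η'' x θ₀| ≤ C)
    (ε : (Fin n₁ ⊕ ℕ) → Ω → ℝ) (hεmeas : ∀ k, Measurable (ε k))
    (hεindep : iIndepFun ε μ)
    (hεlaw : ∀ k, μ.map (ε k) = gaussianReal 0 ⟨σ ^ 2, sq_nonneg σ⟩)
    (ξ : ℝ → ℝ) (hξ : Measurable ξ) (hξab : ∀ y, ξ y ∈ Set.Icc a b)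
    (ybar₁ : Ω → ℝ)
    (hybar₁ : ybar₁ = fun ω => (n₁ : ℝ)⁻¹ * ∑ i : Fin n₁, (η x₁ θ₀ + ε (Sum.inl i) ω))
    (n₂ : ℕ) (hn₂ : 1 ≤ n₂)
    (ybar₂ : Ω → ℝ)
    (hybar₂ : ybar₂ = fun ω =>
      (n₂ : ℝ)⁻¹ * ∑ j ∈ Finset.range n₂, (η (ξ (ybar₁ ω)) θ₀ + ε (Sum.inr j) ω))
    -- the observed information
    (J : Ω → ℝ)
    (hJ : J = fun ω =>
      ((n₁ : ℝ) / σ ^ 2) * (η' x₁ θ₀) ^ 2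
        - ((n₁ : ℝ) / σ ^ 2) * (ybar₁ ω - η x₁ θ₀) * η'' x₁ θ₀
        + ((n₂ : ℝ) / σ ^ 2) * (η' (ξ (ybar₁ ω)) θ₀) ^ 2
        - ((n₂ : ℝ) / σ ^ 2) * (ybar₂ ω - η (ξ (ybar₁ ω)) θ₀) * η'' (ξ (ybar₁ ω)) θ₀) :
    ∫ ω, J ω ∂μ =
      ((n₁ : ℝ) / σ ^ 2) * (η' x₁ θ₀) ^ 2
        + ((n₂ : ℝ) / σ ^ 2) * ∫ ω, (η' (ξ (ybar₁ ω)) θ₀) ^ 2 ∂μ := by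
  classical
  obtain ⟨C', hC'⟩ := hη'bdd
  obtain ⟨C'', hC''⟩ := hη''bdd
  have hn₁' : (n₁:ℝ) ≠ 0 := Nat.cast_ne_zero.mpr (by omega)
  have hn₂' : (n₂:ℝ) ≠ 0 := Nat.cast_ne_zero.mpr (by omega)
  have hσ2 : σ ^ 2 ≠ 0 := by positivity
  have hvne : (⟨σ ^ 2, sq_nonneg σ⟩ : ℝ≥0) ≠ 0 := by
    intro h
    exact hσ2 (congrArg NNReal.toReal h)
  -- integrability and zero mean of the noise variables
  have hεint : ∀ k, Integrable (ε k) μ := by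
    intro k
    have h := integrable_id_gaussian0 hvne
    rw [← hεlaw k] at h
    exact (integrable_map_measure aestronglyMeasurable_id (hεmeas k).aemeasurable).mp h
  have hεzero : ∀ k, ∫ ω, ε k ω ∂μ = 0 := by
    intro k
    have h : ∫ x, x ∂(μ.map (ε k)) = 0 := by
      rw [hεlaw k]; exact integral_id_gaussian0 _
    exact (integral_map (hεmeas k).aemeasurable aestronglyMeasurable_id).symm.trans h
  -- measurability
  have hybar₁m : Measurable ybar₁ := by
    rw [hybar₁]
    exact measurable_const.mul
      (Finset.measurable_sum _ fun i _ => measurable_const.add (hεmeas _))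
  have hxm : Measurable fun ω => ξ (ybar₁ ω) := hξ.comp hybar₁m
  have hgm : Measurable fun ω => η'' (ξ (ybar₁ ω)) θ₀ := hη''.comp hxm
  -- bounded measurable functions are integrable
  have int_of_bdd : ∀ (f : Ω → ℝ) (C : ℝ), Measurable f → (∀ ω, |f ω| ≤ C) →
      Integrable f μ := fun f C hf hb =>
    ⟨hf.aestronglyMeasurable,
      HasFiniteIntegral.of_bounded (C := C)
        (Filter.Eventually.of_forall fun ω => by simpa [Real.norm_eq_abs] using hb ω)⟩
  have hgint : Integrable (fun ω => η'' (ξ (ybar₁ ω)) θ₀) μ :=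
    int_of_bdd _ C'' hgm fun ω => hC'' _ (hξab _)
  -- first-stage noise sum
  have hTint : Integrable (fun ω => ∑ i : Fin n₁, ε (Sum.inl i) ω) μ :=
    integrable_finset_sum _ fun i _ => hεint _
  have hTzero : ∫ ω, ∑ i : Fin n₁, ε (Sum.inl i) ω ∂μ = 0 := by
    rw [integral_finset_sum _ fun i _ => hεint _]
    simp [hεzero]
  have hyT : ∀ ω, ybar₁ ω = (n₁:ℝ)⁻¹ * ((n₁:ℝ) * η x₁ θ₀ + ∑ i : Fin n₁, ε (Sum.inl i) ω) := by
    intro ω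
    rw [hybar₁]
    simp [Finset.sum_add_distrib, nsmul_eq_mul]
  have hyT' : ∀ ω, ybar₁ ω - η x₁ θ₀ = (n₁:ℝ)⁻¹ * ∑ i : Fin n₁, ε (Sum.inl i) ω := by
    intro ω
    rw [hyT ω]
    field_simp
    ring
  have hyU : ∀ ω, ybar₂ ω - η (ξ (ybar₁ ω)) θ₀
      = (n₂:ℝ)⁻¹ * ∑ j ∈ Finset.range n₂, ε (Sum.inr j) ω := by
    intro ω
    rw [hybar₂]
    simp [Finset.sum_add_distrib, nsmul_eq_mul]
    field_simp
    ring
  -- independence of the second-stage noise from the dose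
  have hindep : ∀ j : ℕ,
      IndepFun (fun ω => η'' (ξ (ybar₁ ω)) θ₀) (ε (Sum.inr j)) μ := by
    intro j
    have hnotmem : (Sum.inr j : Fin n₁ ⊕ ℕ)
        ∉ (Finset.univ.image Sum.inl : Finset (Fin n₁ ⊕ ℕ)) := by simp
    have hsum := hεindep.indepFun_finset_sum_of_notMem hεmeas hnotmem
    have hGm : Measurable fun t : ℝ =>
        η'' (ξ ((n₁:ℝ)⁻¹ * ((n₁:ℝ) * η x₁ θ₀ + t))) θ₀ :=
      hη''.comp (hξ.comp ((measurable_const.add measurable_id).const_mul _))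
    have h := hsum.comp hGm measurable_id
    have heq : ((fun t : ℝ => η'' (ξ ((n₁:ℝ)⁻¹ * ((n₁:ℝ) * η x₁ θ₀ + t))) θ₀)
        ∘ (∑ k ∈ Finset.univ.image Sum.inl, ε k))
        = fun ω => η'' (ξ (ybar₁ ω)) θ₀ := by
      funext ω
      have hsum_eq : (∑ k ∈ Finset.univ.image Sum.inl, ε k) ω
          = ∑ i : Fin n₁, ε (Sum.inl i) ω := by
        rw [Finset.sum_apply, Finset.sum_image (fun _ _ _ _ h => Sum.inl_injective h)]
      simp only [Function.comp_apply, hsum_eq]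
      rw [← hyT ω]
    rwa [heq] at h
  -- the cross terms
  have hprodint : ∀ j : ℕ,
      Integrable (fun ω => ε (Sum.inr j) ω * η'' (ξ (ybar₁ ω)) θ₀) μ := by
    intro j
    have h := ((hindep j).symm).integrable_mul (hεint _) hgint
    exact h
  have hcross : ∀ j : ℕ,
      ∫ ω, ε (Sum.inr j) ω * η'' (ξ (ybar₁ ω)) θ₀ ∂μ = 0 := by
    intro j
    have h := ((hindep j).symm).integral_fun_mul_eq_mul_integral (hεint _).aestronglyMeasurable
      hgm.aestronglyMeasurable
    simpa [Pi.mul_apply, hεzero (Sum.inr j)] using h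
  -- the four pieces
  have hf₂ : (fun ω => ((n₁:ℝ) / σ ^ 2) * (ybar₁ ω - η x₁ θ₀) * η'' x₁ θ₀)
      = fun ω => (((n₁:ℝ) / σ ^ 2) * (n₁:ℝ)⁻¹ * η'' x₁ θ₀)
          * ∑ i : Fin n₁, ε (Sum.inl i) ω := by
    funext ω
    rw [hyT' ω]
    ring
  have hf₂int : Integrable
      (fun ω => ((n₁:ℝ) / σ ^ 2) * (ybar₁ ω - η x₁ θ₀) * η'' x₁ θ₀) μ := by
    rw [hf₂]; exact hTint.const_mul _
  have hf₂zero : ∫ ω, ((n₁:ℝ) / σ ^ 2) * (ybar₁ ω - η x₁ θ₀) * η'' x₁ θ₀ ∂μ = 0 := by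
    rw [hf₂, integral_const_mul, hTzero, mul_zero]
  have hsqint : Integrable (fun ω => (η' (ξ (ybar₁ ω)) θ₀) ^ 2) μ := by
    refine int_of_bdd _ (C' ^ 2) ((hη'.comp hxm).pow_const 2) fun ω => ?_
    calc |(η' (ξ (ybar₁ ω)) θ₀) ^ 2| = |η' (ξ (ybar₁ ω)) θ₀| ^ 2 := abs_pow _ _
      _ ≤ C' ^ 2 := pow_le_pow_left₀ (abs_nonneg _) (hC' _ (hξab _)) 2
  have hf₃int : Integrable (fun ω => ((n₂:ℝ) / σ ^ 2) * (η' (ξ (ybar₁ ω)) θ₀) ^ 2) μ :=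
    hsqint.const_mul _
  have hf₄ : (fun ω => ((n₂:ℝ) / σ ^ 2) * (ybar₂ ω - η (ξ (ybar₁ ω)) θ₀)
        * η'' (ξ (ybar₁ ω)) θ₀)
      = fun ω => (((n₂:ℝ) / σ ^ 2) * (n₂:ℝ)⁻¹)
          * ∑ j ∈ Finset.range n₂, ε (Sum.inr j) ω * η'' (ξ (ybar₁ ω)) θ₀ := by
    funext ω
    rw [hyU ω, ← Finset.sum_mul]
    ring
  have hf₄int : Integrable (fun ω => ((n₂:ℝ) / σ ^ 2)
      * (ybar₂ ω - η (ξ (ybar₁ ω)) θ₀) * η'' (ξ (ybar₁ ω)) θ₀) μ := by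
    rw [hf₄]
    exact (integrable_finset_sum _ fun j _ => hprodint j).const_mul _
  have hf₄zero : ∫ ω, ((n₂:ℝ) / σ ^ 2)
      * (ybar₂ ω - η (ξ (ybar₁ ω)) θ₀) * η'' (ξ (ybar₁ ω)) θ₀ ∂μ = 0 := by
    rw [hf₄, integral_const_mul, integral_finset_sum _ fun j _ => hprodint j]
    simp [hcross]
  -- put everything together
  have hf₁int : Integrable (fun _ : Ω => ((n₁:ℝ) / σ ^ 2) * (η' x₁ θ₀) ^ 2) μ :=
    integrable_const _
  have hLsub : Integrable (fun ω => ((n₁:ℝ) / σ ^ 2) * (η' x₁ θ₀) ^ 2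
      - ((n₁:ℝ) / σ ^ 2) * (ybar₁ ω - η x₁ θ₀) * η'' x₁ θ₀) μ := hf₁int.sub hf₂int
  have hLadd : Integrable (fun ω => ((n₁:ℝ) / σ ^ 2) * (η' x₁ θ₀) ^ 2
      - ((n₁:ℝ) / σ ^ 2) * (ybar₁ ω - η x₁ θ₀) * η'' x₁ θ₀
      + ((n₂:ℝ) / σ ^ 2) * (η' (ξ (ybar₁ ω)) θ₀) ^ 2) μ := hLsub.add hf₃int
  simp only [hJ]
  rw [integral_sub hLadd hf₄int, integral_add hLsub hf₃int, integral_sub hf₁int hf₂int,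
    hf₂zero, hf₄zero, integral_const_mul, integral_const]
  simp
  exact integral_const_mul _ _
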